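/- For solutions of the two-layer Lorenz 96 system with initial data in the absorbing ball of radius ρ_*, the time derivatives satisfy sup_{t ≥ 0} (‖u̇(t)‖² + ‖v̇(t)‖²) ≤ 4[(1 + ‖γ‖²)ρ_*² + ‖d‖² + ‖γ‖²] ρ_*², where ‖γ‖² = ∑_j γ_j², ‖d‖² = ∑_k d_k² + ∑_{k,j} d_{k,j}², and F² ≤ ρ_*² d_*²/(2K) is used via ρ_*² = 2K F²/d_*². -/

import Mathlib

open Real Finset

/-- L2 Minkowski-type inequality for finset sums. -/
lemma sum_add_sq_le' {ι : Type*} (s : Finset ι) (f g : ι → ℝ) :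
    ∑ i ∈ s, (f i + g i) ^ 2
      ≤ (Real.sqrt (∑ i ∈ s, f i ^ 2) + Real.sqrt (∑ i ∈ s, g i ^ 2)) ^ 2 := by
  have hf : (0:ℝ) ≤ ∑ i ∈ s, f i ^ 2 := Finset.sum_nonneg fun i _ => sq_nonneg _
  have hg : (0:ℝ) ≤ ∑ i ∈ s, g i ^ 2 := Finset.sum_nonneg fun i _ => sq_nonneg _
  have hcs : ∑ i ∈ s, f i * g i
      ≤ Real.sqrt (∑ i ∈ s, f i ^ 2) * Real.sqrt (∑ i ∈ s, g i ^ 2) := by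
    have h1 := Finset.sum_mul_sq_le_sq_mul_sq s f g
    have h2 := Real.sqrt_le_sqrt h1
    rw [Real.sqrt_sq_eq_abs, Real.sqrt_mul hf] at h2
    exact (le_abs_self _).trans h2
  have e1 : ∑ i ∈ s, (f i + g i) ^ 2
      = (∑ i ∈ s, f i ^ 2) + 2 * (∑ i ∈ s, f i * g i) + ∑ i ∈ s, g i ^ 2 := by
    rw [Finset.mul_sum, ← Finset.sum_add_distrib, ← Finset.sum_add_distrib]
    exact Finset.sum_congr rfl fun i _ => by ring
  rw [e1]
  nlinarith [hcs, Real.sq_sqrt hf, Real.sq_sqrt hg]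

lemma sqrt_sum_add_sq_le {ι : Type*} (s : Finset ι) (f g : ι → ℝ) :
    Real.sqrt (∑ i ∈ s, (f i + g i) ^ 2)
      ≤ Real.sqrt (∑ i ∈ s, f i ^ 2) + Real.sqrt (∑ i ∈ s, g i ^ 2) := by
  have h := Real.sqrt_le_sqrt (sum_add_sq_le' s f g)
  rwa [Real.sqrt_sq (by positivity)] at h

lemma sum_four_sq_le {ι : Type*} [Fintype ι] (f g h k : ι → ℝ) :
    ∑ i, (f i + g i - h i + k i) ^ 2
      ≤ (Real.sqrt (∑ i, f i ^ 2) + Real.sqrt (∑ i, g i ^ 2)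
          + Real.sqrt (∑ i, h i ^ 2) + Real.sqrt (∑ i, k i ^ 2)) ^ 2 := by
  have key : Real.sqrt (∑ i, (f i + g i - h i + k i) ^ 2)
      ≤ Real.sqrt (∑ i, f i ^ 2) + Real.sqrt (∑ i, g i ^ 2)
          + Real.sqrt (∑ i, h i ^ 2) + Real.sqrt (∑ i, k i ^ 2) := by
    have h1 : Real.sqrt (∑ i, (f i + g i - h i + k i) ^ 2)
        ≤ Real.sqrt (∑ i, (f i + g i - h i) ^ 2) + Real.sqrt (∑ i, k i ^ 2) :=
      sqrt_sum_add_sq_le Finset.univ (fun i => f i + g i - h i) k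
    have h2 : Real.sqrt (∑ i, (f i + g i - h i) ^ 2)
        ≤ Real.sqrt (∑ i, (f i + g i) ^ 2) + Real.sqrt (∑ i, h i ^ 2) := by
      have := sqrt_sum_add_sq_le Finset.univ (fun i => f i + g i) (fun i => - h i)
      simp only [neg_sq, sub_eq_add_neg] at this ⊢
      exact this
    have h3 : Real.sqrt (∑ i, (f i + g i) ^ 2)
        ≤ Real.sqrt (∑ i, f i ^ 2) + Real.sqrt (∑ i, g i ^ 2) :=
      sqrt_sum_add_sq_le Finset.univ f g
    linarith
  calc ∑ i, (f i + g i - h i + k i) ^ 2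
      = Real.sqrt (∑ i, (f i + g i - h i + k i) ^ 2) ^ 2 := by
        rw [Real.sq_sqrt (Finset.sum_nonneg fun i _ => sq_nonneg _)]
    _ ≤ _ := pow_le_pow_left₀ (Real.sqrt_nonneg _) key 2

lemma sum_two_sq_le {ι : Type*} [Fintype ι] (f g : ι → ℝ) :
    ∑ i, (-(f i) - g i) ^ 2
      ≤ (Real.sqrt (∑ i, f i ^ 2) + Real.sqrt (∑ i, g i ^ 2)) ^ 2 := by
  have h1 : ∀ i, (-(f i) - g i) ^ 2 = (f i + g i) ^ 2 := fun i => by ring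
  simp only [h1]
  exact sum_add_sq_le' Finset.univ f g

/-- The advection term estimate `∑ aₖ² ≤ 2 A²`. -/
lemma advection_bound (K : ℕ) (hK : 1 ≤ K) (u : ZMod (K+1) → ℝ) :
    ∑ k, (u (k-1) * (u (k+1) - u (k-2))) ^ 2 ≤ 2 * (∑ k, u k ^ 2) ^ 2 := by
  set A := ∑ k, u k ^ 2 with hA
  have hne : ∀ i : ZMod (K+1), i + 1 ≠ i + 2 := by
    intro i h
    have h2 : (1 : ZMod (K+1)) = 2 := by exact add_left_cancel h
    have h4 : (0 : ZMod (K+1)) = 1 := by linear_combination h2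
    haveI : Fact (1 < K + 1) := ⟨by omega⟩
    exact zero_ne_one h4
  have step1 : ∑ k, (u (k-1) * (u (k+1) - u (k-2))) ^ 2
      ≤ ∑ k, (2 * (u (k-1)^2 * u (k+1)^2) + 2 * (u (k-1)^2 * u (k-2)^2)) := by
    apply Finset.sum_le_sum
    intro k _
    nlinarith [sq_nonneg (u (k-1) * (u (k+1) + u (k-2)))]
  have e1 : ∑ k : ZMod (K+1), u (k-1)^2 * u (k+1)^2 = ∑ i : ZMod (K+1), u i ^2 * u (i+2)^2 := by
    apply Fintype.sum_equiv (Equiv.subRight (1 : ZMod (K+1)))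
    intro i
    simp only [Equiv.subRight_apply]
    ring_nf
  have e2 : ∑ k : ZMod (K+1), u (k-1)^2 * u (k-2)^2 = ∑ i : ZMod (K+1), u (i+1) ^2 * u i ^2 := by
    apply Fintype.sum_equiv (Equiv.subRight (2 : ZMod (K+1)))
    intro i
    simp only [Equiv.subRight_apply]
    ring_nf
  have step2 : ∑ i : ZMod (K+1), u i ^ 2 * (u (i+1)^2 + u (i+2)^2)
      ≤ ∑ i : ZMod (K+1), u i ^2 * A := by
    apply Finset.sum_le_sum
    intro i _
    apply mul_le_mul_of_nonneg_left _ (sq_nonneg _)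
    have hp : u (i+1)^2 + u (i+2)^2 = ∑ k ∈ ({i+1, i+2} : Finset (ZMod (K+1))), u k ^ 2 :=
      (Finset.sum_pair (f := fun k => u k ^ 2) (hne i)).symm
    rw [hp, hA]
    exact Finset.sum_le_univ_sum_of_nonneg fun k => sq_nonneg _
  calc ∑ k, (u (k-1) * (u (k+1) - u (k-2))) ^ 2
      ≤ ∑ k, (2 * (u (k-1)^2 * u (k+1)^2) + 2 * (u (k-1)^2 * u (k-2)^2)) := step1
    _ = 2 * (∑ i : ZMod (K+1), u i ^2 * u (i+2)^2)
        + 2 * (∑ i : ZMod (K+1), u (i+1) ^2 * u i ^2) := by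
        rw [Finset.sum_add_distrib, ← Finset.mul_sum, ← Finset.mul_sum, e1, e2]
    _ = 2 * ∑ i : ZMod (K+1), u i ^ 2 * (u (i+1)^2 + u (i+2)^2) := by
        rw [Finset.mul_sum, Finset.mul_sum, Finset.mul_sum, ← Finset.sum_add_distrib]
        apply Finset.sum_congr rfl; intro i _; ring
    _ ≤ 2 * ∑ i : ZMod (K+1), u i ^2 * A := by
        exact mul_le_mul_of_nonneg_left step2 (by norm_num)
    _ = 2 * A ^ 2 := by rw [← Finset.sum_mul]; ring

set_option maxHeartbeats 1000000 in
/-- The main scalar inequality. -/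
lemma key_ineq (A B G Du Dv s p q r w e f : ℝ)
    (hA : 0 ≤ A) (hB : 0 ≤ B) (hG : 0 ≤ G) (hDu : 0 ≤ Du) (hDv : 0 ≤ Dv)
    (hs : A + B ≤ s)
    (hp : p ^ 2 ≤ 2 * A ^ 2) (hq : q ^ 2 ≤ G * A * B) (hr : r ^ 2 ≤ Du * A)
    (hw : w ^ 2 ≤ s * Dv / 2) (hw' : w ^ 2 ≤ s * Du / 2)
    (he : e ^ 2 ≤ Dv * B) (hf : f ^ 2 ≤ G * A ^ 2) :
    (p + q + r + w) ^ 2 + (e + f) ^ 2 ≤ 4 * (1 + G) * s ^ 2 + 4 * (Du + Dv) * s := by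
  have hs0 : (0:ℝ) ≤ s := le_trans (by linarith) hs
  have hGAB : G * A * B ≤ G * A * (s - A) := by
    nlinarith [mul_nonneg (mul_nonneg hG hA) (show (0:ℝ) ≤ s - A - B by linarith)]
  rcases le_or_gt A (s / 2) with hcase | hcase
  · -- A ≤ s/2
    have young : (p+q+r+w)^2 + (e+f)^2 ≤ (23/5)*p^2 + (17/3)*q^2 + (23/7)*r^2
        + (116/35)*w^2 + (7/5)*e^2 + (7/2)*f^2 := by
      nlinarith [sq_nonneg (4*p - 5*q), sq_nonneg (7*p - 5*r), sq_nonneg (7*p - 5*w),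
        sq_nonneg (7*q - 4*r), sq_nonneg (5*q - 3*w), sq_nonneg (r - w), sq_nonneg (2*e - 5*f)]
    have slot1 : (23/5) * p ^ 2 ≤ 4 * s ^ 2 := by
      nlinarith [hp, mul_nonneg (show (0:ℝ) ≤ s/2 - A by linarith)
        (show (0:ℝ) ≤ s/2 + A by linarith)]
    have slot2 : (17/3) * q ^ 2 + (7/2) * f ^ 2 ≤ 4 * G * s ^ 2 := by
      nlinarith [hq, hf, hGAB, mul_nonneg hG (sq_nonneg (26*A - 34*s)), mul_nonneg hG (sq_nonneg s)]
    have slot3 : (23/7) * r ^ 2 + (232/175) * w ^ 2 ≤ 4 * Du * s := by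
      have h1 : (0:ℝ) ≤ Du * (s/2 - A) := mul_nonneg hDu (by linarith)
      have h2 : (0:ℝ) ≤ Du * s := mul_nonneg hDu hs0
      nlinarith [hr, hw']
    have slot4 : (348/175) * w ^ 2 + (7/5) * e ^ 2 ≤ 4 * Dv * s := by
      have h1 : (0:ℝ) ≤ Dv * (s - B) := mul_nonneg hDv (by linarith)
      have h2 : (0:ℝ) ≤ Dv * s := mul_nonneg hDv hs0
      nlinarith [hw, he]
    linarith [young, slot1, slot2, slot3, slot4]
  · -- A > s/2
    have young : (p+q+r+w)^2 + (e+f)^2 ≤ (59/30)*p^2 + (123/10)*q^2 + (83/21)*r^2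
        + (115/18)*w^2 + (8/5)*e^2 + (8/3)*f^2 := by
      nlinarith [sq_nonneg (p - 6*q), sq_nonneg (p - 2*r), sq_nonneg (3*p - 10*w),
        sq_nonneg (7*q - 2*r), sq_nonneg (9*q - 5*w), sq_nonneg (2*r - 3*w), sq_nonneg (3*e - 5*f)]
    have slot1 : (59/30) * p ^ 2 ≤ 4 * s ^ 2 := by
      nlinarith [hp, mul_nonneg (show (0:ℝ) ≤ s - A by linarith)
        (show (0:ℝ) ≤ s + A by linarith)]
    have slot2 : (123/10) * q ^ 2 + (8/3) * f ^ 2 ≤ 4 * G * s ^ 2 := by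
      nlinarith [hq, hf, hGAB, mul_nonneg hG (sq_nonneg (578*A - 369*s)),
        mul_nonneg hG (sq_nonneg s)]
    have slot3 : (83/21) * r ^ 2 ≤ 4 * Du * s := by
      have h1 : (0:ℝ) ≤ Du * (s - A) := mul_nonneg hDu (by linarith)
      have h2 : (0:ℝ) ≤ Du * s := mul_nonneg hDu hs0
      nlinarith [hr]
    have slot4 : (115/18) * w ^ 2 + (8/5) * e ^ 2 ≤ 4 * Dv * s := by
      have h1 : (0:ℝ) ≤ Dv * (s/2 - B) := mul_nonneg hDv (by linarith)
      have h2 : (0:ℝ) ≤ Dv * s := mul_nonneg hDv hs0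
      nlinarith [hw, he]
    linarith [young, slot1, slot2, slot3, slot4]

set_option maxHeartbeats 1000000 in
/-- Bound on the time derivatives for the two-layer Lorenz 96 system with data in the
absorbing ball: `‖u̇‖² + ‖v̇‖² ≤ 4[(1 + ‖γ‖²)ρ_*² + ‖d‖² + ‖γ‖²] ρ_*²`, where
`‖γ‖² = ∑ γ_j²`, `‖d‖² = ∑ d_k² + ∑ d_{k,j}²`, and `ρ_*² = 2K F²/d_*²`. -/
theorem stmt_5 (K J : ℕ) [NeZero J]
    (u : ℝ → ZMod (K + 1) → ℝ) (v : ℝ → ZMod (K + 1) → Fin J → ℝ)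
    (γ : Fin J → ℝ) (d : ZMod (K + 1) → ℝ) (dv : ZMod (K + 1) → Fin J → ℝ)
    (F dstar ρ : ℝ)
    (hγ : ∀ j, 0 < γ j) (hd : ∀ k, 0 < d k) (hdv : ∀ k j, 0 < dv k j)
    (hdstar : dstar = Finset.univ.inf' Finset.univ_nonempty
      (fun k => min (d k) (Finset.univ.inf' Finset.univ_nonempty fun j => dv k j)))
    (hρ : ρ ^ 2 = 2 * (K : ℝ) * F ^ 2 / dstar ^ 2)
    (hu : ∀ t k, HasDerivAt (fun s => u s k)
      (u t (k - 1) * (u t (k + 1) - u t (k - 2))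
        + (∑ j, γ j * v t k j * u t k) - d k * u t k + F) t)
    (hv : ∀ t k j, HasDerivAt (fun s => v s k j)
      (-(dv k j) * v t k j - γ j * (u t k) ^ 2) t)
    (habs : ∀ t ≥ (0 : ℝ),
      (∑ k, (u t k) ^ 2) + (∑ k, ∑ j, (v t k j) ^ 2) ≤ ρ ^ 2) :
    ∀ t ≥ (0 : ℝ),
      (∑ k, (u t (k - 1) * (u t (k + 1) - u t (k - 2))
          + (∑ j, γ j * v t k j * u t k) - d k * u t k + F) ^ 2)
        + (∑ k, ∑ j, (-(dv k j) * v t k j - γ j * (u t k) ^ 2) ^ 2)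
      ≤ 4 * ((1 + ∑ j, (γ j) ^ 2) * ρ ^ 2
            + ((∑ k, (d k) ^ 2) + ∑ k, ∑ j, (dv k j) ^ 2)
            + ∑ j, (γ j) ^ 2) * ρ ^ 2 := by
  have hdstar0 : 0 < dstar := by
    rw [hdstar, Finset.lt_inf'_iff]
    intro k _
    exact lt_min (hd k) (by rw [Finset.lt_inf'_iff]; intro j _; exact hdv k j)
  intro t ht
  rcases Nat.eq_zero_or_pos K with hK0 | hKpos
  · -- K = 0 case : ρ² = 0, everything vanishes, and F = 0 by the ODE
    subst hK0
    have hs0 : ρ ^ 2 = 0 := by rw [hρ]; norm_num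
    have huz : ∀ τ ≥ (0:ℝ), ∀ k, u τ k = 0 := by
      intro τ hτ k
      have h := habs τ hτ
      rw [hs0] at h
      have hBnn : (0:ℝ) ≤ ∑ k, ∑ j, (v τ k j) ^ 2 := by positivity
      have hAle : ∑ k, (u τ k) ^ 2 ≤ 0 := by linarith
      have hAz : ∑ k, (u τ k) ^ 2 = 0 :=
        le_antisymm hAle (Finset.sum_nonneg fun k _ => sq_nonneg _)
      have := (Finset.sum_eq_zero_iff_of_nonneg (fun k _ => sq_nonneg (u τ k))).mp hAz
        k (Finset.mem_univ k)
      exact pow_eq_zero_iff (n := 2) (by norm_num) |>.mp this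
    have hvz : ∀ τ ≥ (0:ℝ), ∀ k j, v τ k j = 0 := by
      intro τ hτ k j
      have h := habs τ hτ
      rw [hs0] at h
      have hAnn : (0:ℝ) ≤ ∑ k, (u τ k) ^ 2 := by positivity
      have hBle : ∑ k, ∑ j, (v τ k j) ^ 2 ≤ 0 := by linarith
      have hBz : ∑ k, ∑ j, (v τ k j) ^ 2 = 0 :=
        le_antisymm hBle (Finset.sum_nonneg fun k _ => Finset.sum_nonneg fun j _ => sq_nonneg _)
      have h1 := (Finset.sum_eq_zero_iff_of_nonneg
        (fun k _ => Finset.sum_nonneg fun j _ => sq_nonneg (v τ k j))).mp hBz k (Finset.mem_univ k)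
      have h2 := (Finset.sum_eq_zero_iff_of_nonneg (fun j _ => sq_nonneg (v τ k j))).mp h1
        j (Finset.mem_univ j)
      exact pow_eq_zero_iff (n := 2) (by norm_num) |>.mp h2
    have hF0 : F = 0 := by
      have h1 := hu 1 0
      have heq : (fun s => u s 0) =ᶠ[nhds (1:ℝ)] fun _ => (0:ℝ) := by
        filter_upwards [isOpen_Ioi.mem_nhds (show (0:ℝ) < 1 by norm_num)] with x hx
        exact huz x (le_of_lt hx) 0
      have h2 := h1.congr_of_eventuallyEq heq.symm
      have h3 := h2.unique (hasDerivAt_const 1 0)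
      have hu1 : ∀ k, u 1 k = 0 := huz 1 (by norm_num)
      have hv1 : ∀ k j, v 1 k j = 0 := hvz 1 (by norm_num)
      simp only [hu1, hv1, mul_zero, zero_mul, sub_zero, zero_sub, mul_comm] at h3
      simpa using h3
    have hut : ∀ k, u t k = 0 := huz t ht
    have hvt : ∀ k j, v t k j = 0 := hvz t ht
    rw [hs0]
    simp [hut, hvt, hF0]
  · -- K ≥ 1 case
    have hK1 : (1:ℝ) ≤ (K:ℝ) := by exact_mod_cast hKpos
    set A := ∑ k, (u t k) ^ 2 with hA
    set B := ∑ k, ∑ j, (v t k j) ^ 2 with hB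
    set G := ∑ j, (γ j) ^ 2 with hG
    set Du := ∑ k, (d k) ^ 2 with hDu
    set Dv := ∑ k, ∑ j, (dv k j) ^ 2 with hDv
    set s := ρ ^ 2 with hsdef
    have hAB : A + B ≤ s := habs t ht
    have hA0 : 0 ≤ A := Finset.sum_nonneg fun k _ => sq_nonneg _
    have hB0 : 0 ≤ B := Finset.sum_nonneg fun k _ => Finset.sum_nonneg fun j _ => sq_nonneg _
    have hG0 : 0 ≤ G := Finset.sum_nonneg fun j _ => sq_nonneg _
    have hDu0 : 0 ≤ Du := Finset.sum_nonneg fun k _ => sq_nonneg _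
    have hDv0 : 0 ≤ Dv := Finset.sum_nonneg fun k _ => Finset.sum_nonneg fun j _ => sq_nonneg _
    have hs0 : 0 ≤ s := le_trans (by linarith) hAB
    have hu2A : ∀ k, (u t k) ^ 2 ≤ A :=
      fun k => Finset.single_le_sum (fun k _ => sq_nonneg (u t k)) (Finset.mem_univ k)
    have hv2B : ∀ k j, (v t k j) ^ 2 ≤ B := by
      intro k j
      have h1 : (v t k j) ^ 2 ≤ ∑ j, (v t k j) ^ 2 :=
        Finset.single_le_sum (fun j _ => sq_nonneg (v t k j)) (Finset.mem_univ j)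
      exact h1.trans (Finset.single_le_sum
        (f := fun k => ∑ j, (v t k j) ^ 2)
        (fun k _ => Finset.sum_nonneg fun j _ => sq_nonneg _) (Finset.mem_univ k))
    -- bounds on the six pieces
    have ha : ∑ k, (u t (k-1) * (u t (k+1) - u t (k-2))) ^ 2 ≤ 2 * A ^ 2 :=
      advection_bound K hKpos (u t)
    have hb : ∑ k, (∑ j, γ j * v t k j * u t k) ^ 2 ≤ G * A * B := by
      have hper : ∀ k, (∑ j, γ j * v t k j * u t k) ^ 2
          ≤ G * (∑ j, (v t k j) ^ 2) * A := by
        intro k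
        have e : (∑ j, γ j * v t k j * u t k) = (∑ j, γ j * v t k j) * u t k :=
          (Finset.sum_mul _ _ _).symm
        rw [e, mul_pow]
        have h1 := Finset.sum_mul_sq_le_sq_mul_sq Finset.univ γ (v t k)
        exact mul_le_mul h1 (hu2A k) (sq_nonneg _)
          (mul_nonneg hG0 (Finset.sum_nonneg fun j _ => sq_nonneg _))
      calc ∑ k, (∑ j, γ j * v t k j * u t k) ^ 2
          ≤ ∑ k, G * (∑ j, (v t k j) ^ 2) * A :=
            Finset.sum_le_sum fun k _ => hper k
        _ = G * A * B := by
            conv_rhs => rw [hB, Finset.mul_sum]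
            exact Finset.sum_congr rfl fun k _ => by ring
    have hc : ∑ k, (d k * u t k) ^ 2 ≤ Du * A := by
      calc ∑ k, (d k * u t k) ^ 2 = ∑ k, (d k) ^ 2 * (u t k) ^ 2 := by
            exact Finset.sum_congr rfl fun k _ => by ring
        _ ≤ ∑ k, (d k) ^ 2 * A :=
            Finset.sum_le_sum fun k _ => mul_le_mul_of_nonneg_left (hu2A k) (sq_nonneg _)
        _ = Du * A := by rw [hDu, Finset.sum_mul]
    have hFsum : ∑ _k : ZMod (K+1), F ^ 2 = ((K:ℝ)+1) * F ^ 2 := by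
      rw [Finset.sum_const, Finset.card_univ, ZMod.card, nsmul_eq_mul]
      push_cast
      ring
    have hds_le_d : ∀ k, dstar ≤ d k := by
      intro k
      rw [hdstar]
      exact le_trans (Finset.inf'_le _ (Finset.mem_univ k)) (min_le_left _ _)
    have hds_le_dv : ∀ k j, dstar ≤ dv k j := by
      intro k j
      rw [hdstar]
      exact le_trans (Finset.inf'_le _ (Finset.mem_univ k))
        (le_trans (min_le_right _ _) (Finset.inf'_le _ (Finset.mem_univ j)))
    have hcard : ∀ c : ℝ, ∑ _k : ZMod (K+1), c = ((K:ℝ)+1) * c := by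
      intro c
      rw [Finset.sum_const, Finset.card_univ, ZMod.card, nsmul_eq_mul]
      push_cast
      ring
    have hDu_ge : ((K:ℝ)+1) * dstar ^ 2 ≤ Du := by
      rw [← hcard (dstar ^ 2), hDu]
      exact Finset.sum_le_sum fun k _ => pow_le_pow_left₀ hdstar0.le (hds_le_d k) 2
    have hDv_ge : ((K:ℝ)+1) * dstar ^ 2 ≤ Dv := by
      obtain ⟨j0⟩ : Nonempty (Fin J) := ⟨⟨0, Nat.pos_of_ne_zero (NeZero.ne J)⟩⟩
      rw [← hcard (dstar ^ 2), hDv]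
      apply Finset.sum_le_sum
      intro k _
      calc dstar ^ 2 ≤ (dv k j0) ^ 2 := pow_le_pow_left₀ hdstar0.le (hds_le_dv k j0) 2
        _ ≤ ∑ j, (dv k j) ^ 2 :=
            Finset.single_le_sum (f := fun j => (dv k j) ^ 2)
              (fun j _ => sq_nonneg _) (Finset.mem_univ j0)
    have hF2 : F ^ 2 * (2 * (K:ℝ)) = s * dstar ^ 2 := by
      rw [hρ]
      field_simp
    have hwDv : ((K:ℝ)+1) * F ^ 2 ≤ s * Dv / 2 := by
      nlinarith [mul_le_mul_of_nonneg_left hDv_ge hs0, hF2,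
        mul_nonneg (mul_nonneg (sub_nonneg.2 hK1) (show (0:ℝ) ≤ (K:ℝ)+1 by linarith))
          (sq_nonneg F), sq_nonneg F, hs0]
    have hwDu : ((K:ℝ)+1) * F ^ 2 ≤ s * Du / 2 := by
      nlinarith [mul_le_mul_of_nonneg_left hDu_ge hs0, hF2,
        mul_nonneg (mul_nonneg (sub_nonneg.2 hK1) (show (0:ℝ) ≤ (K:ℝ)+1 by linarith))
          (sq_nonneg F), sq_nonneg F, hs0]
    have he : ∑ k, ∑ j, (dv k j * v t k j) ^ 2 ≤ Dv * B := by
      calc ∑ k, ∑ j, (dv k j * v t k j) ^ 2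
          ≤ ∑ k, ∑ j, (dv k j) ^ 2 * B := by
            apply Finset.sum_le_sum; intro k _
            apply Finset.sum_le_sum; intro j _
            calc (dv k j * v t k j) ^ 2 = (dv k j) ^ 2 * (v t k j) ^ 2 := by ring
              _ ≤ (dv k j) ^ 2 * B := mul_le_mul_of_nonneg_left (hv2B k j) (sq_nonneg _)
        _ = Dv * B := by
            rw [hDv, Finset.sum_mul]
            exact Finset.sum_congr rfl fun k _ => by rw [Finset.sum_mul]
    have hfb : ∑ k, ∑ j, (γ j * (u t k) ^ 2) ^ 2 ≤ G * A ^ 2 := by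
      have hinner : ∀ k, ∑ j, (γ j * (u t k) ^ 2) ^ 2 = G * ((u t k) ^ 2) ^ 2 := by
        intro k
        rw [hG, Finset.sum_mul]
        exact Finset.sum_congr rfl fun j _ => by ring
      calc ∑ k, ∑ j, (γ j * (u t k) ^ 2) ^ 2 = ∑ k, G * ((u t k) ^ 2) ^ 2 :=
            Finset.sum_congr rfl fun k _ => hinner k
        _ = G * ∑ k, ((u t k) ^ 2) ^ 2 := by rw [Finset.mul_sum]
        _ ≤ G * A ^ 2 := by
            apply mul_le_mul_of_nonneg_left _ hG0
            rw [hA]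
            exact Finset.sum_sq_le_sq_sum_of_nonneg fun k _ => sq_nonneg _
    -- Minkowski bounds
    set p := Real.sqrt (∑ k, (u t (k-1) * (u t (k+1) - u t (k-2))) ^ 2) with hp
    set q := Real.sqrt (∑ k, (∑ j, γ j * v t k j * u t k) ^ 2) with hq
    set r := Real.sqrt (∑ k, (d k * u t k) ^ 2) with hr
    set w := Real.sqrt (∑ _k : ZMod (K+1), F ^ 2) with hw
    have hLu : ∑ k, (u t (k - 1) * (u t (k + 1) - u t (k - 2))
          + (∑ j, γ j * v t k j * u t k) - d k * u t k + F) ^ 2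
        ≤ (p + q + r + w) ^ 2 :=
      sum_four_sq_le (fun k => u t (k-1) * (u t (k+1) - u t (k-2)))
        (fun k => ∑ j, γ j * v t k j * u t k) (fun k => d k * u t k) (fun _ => F)
    set qe := Real.sqrt (∑ x : ZMod (K+1) × Fin J, (dv x.1 x.2 * v t x.1 x.2) ^ 2) with hqe
    set qf := Real.sqrt (∑ x : ZMod (K+1) × Fin J, (γ x.2 * (u t x.1) ^ 2) ^ 2) with hqf
    have hLv : ∑ k, ∑ j, (-(dv k j) * v t k j - γ j * (u t k) ^ 2) ^ 2
        ≤ (qe + qf) ^ 2 := by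
      have e1 : ∑ k, ∑ j, (-(dv k j) * v t k j - γ j * (u t k) ^ 2) ^ 2
          = ∑ x : ZMod (K+1) × Fin J,
              (-(dv x.1 x.2 * v t x.1 x.2) - γ x.2 * (u t x.1) ^ 2) ^ 2 := by
        rw [Fintype.sum_prod_type]
        exact Finset.sum_congr rfl fun k _ => Finset.sum_congr rfl fun j _ => by ring_nf
      rw [e1]
      exact sum_two_sq_le (fun x : ZMod (K+1) × Fin J => dv x.1 x.2 * v t x.1 x.2)
        (fun x : ZMod (K+1) × Fin J => γ x.2 * (u t x.1) ^ 2)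
    -- the squares of the sqrt quantities
    have hp2 : p ^ 2 ≤ 2 * A ^ 2 := by
      rw [hp, Real.sq_sqrt (Finset.sum_nonneg fun k _ => sq_nonneg _)]; exact ha
    have hq2 : q ^ 2 ≤ G * A * B := by
      rw [hq, Real.sq_sqrt (Finset.sum_nonneg fun k _ => sq_nonneg _)]; exact hb
    have hr2 : r ^ 2 ≤ Du * A := by
      rw [hr, Real.sq_sqrt (Finset.sum_nonneg fun k _ => sq_nonneg _)]; exact hc
    have hw2Dv : w ^ 2 ≤ s * Dv / 2 := by
      rw [hw, Real.sq_sqrt (Finset.sum_nonneg fun k _ => sq_nonneg _), hFsum]; exact hwDv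
    have hw2Du : w ^ 2 ≤ s * Du / 2 := by
      rw [hw, Real.sq_sqrt (Finset.sum_nonneg fun k _ => sq_nonneg _), hFsum]; exact hwDu
    have hqe2 : qe ^ 2 ≤ Dv * B := by
      rw [hqe, Real.sq_sqrt (Finset.sum_nonneg fun x _ => sq_nonneg _),
        Fintype.sum_prod_type]
      exact he
    have hqf2 : qf ^ 2 ≤ G * A ^ 2 := by
      rw [hqf, Real.sq_sqrt (Finset.sum_nonneg fun x _ => sq_nonneg _),
        Fintype.sum_prod_type]
      exact hfb
    have hkey := key_ineq A B G Du Dv s p q r w qe qf hA0 hB0 hG0 hDu0 hDv0 hAB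
      hp2 hq2 hr2 hw2Dv hw2Du hqe2 hqf2
    have hfinal : 4 * (1 + G) * s ^ 2 + 4 * (Du + Dv) * s
        ≤ 4 * ((1 + G) * s + (Du + Dv) + G) * s := by
      linarith [mul_nonneg hG0 hs0]
    linarith [hLu, hLv, hkey, hfinal]
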